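/- The polynomial semiring N[x] is not congruence-Noetherian: there exists a strictly ascending infinite chain of semiring congruences on N[x]. Specifically, letting ρ_n be the congruence generated by the pairs (x^i + 1, x + 1) for 2 ≤ i ≤ n, one has ρ_1 ⊊ ρ_2 ⊊ ρ_3 ⊊ ⋯, since (x^{n+1} + 1, x + 1) ∉ ρ_n for every n ≥ 1. -/

import Mathlib

open Polynomial

private def Dpred (n : ℕ) (p : Polynomial ℕ) : Prop :=
  ∃ (i : ℕ) (r s : Polynomial ℕ), 1 ≤ i ∧ i ≤ n ∧ r ≠ 0 ∧ p = r * (X ^ i + 1) + s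

private lemma D_add {n : ℕ} {p : Polynomial ℕ} (h : Dpred n p) (q : Polynomial ℕ) :
    Dpred n (p + q) := by
  obtain ⟨i, r, s, h1, h2, h3, h4⟩ := h
  exact ⟨i, r, s + q, h1, h2, h3, by rw [h4]; ring⟩

private lemma D_mul {n : ℕ} {p : Polynomial ℕ} (h : Dpred n p) {q : Polynomial ℕ}
    (hq : q ≠ 0) : Dpred n (p * q) := by
  obtain ⟨i, r, s, h1, h2, h3, h4⟩ := h
  refine ⟨i, r * q, s * q, h1, h2, mul_ne_zero h3 hq, by rw [h4]; ring⟩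

private lemma D_ne_zero {n : ℕ} {p : Polynomial ℕ} (h : Dpred n p) : p ≠ 0 := by
  obtain ⟨i, r, s, h1, h2, h3, h4⟩ := h
  intro hp
  rw [hp] at h4
  have hx : (X ^ i + 1 : Polynomial ℕ) ≠ 0 := by
    intro hc
    have := congrArg (fun f => Polynomial.coeff f 0) hc
    simp at this
  have hr : r * (X ^ i + 1) ≠ 0 := mul_ne_zero h3 hx
  apply hr
  ext k
  have h5 := congrArg (fun f => Polynomial.coeff f k) h4
  simp only [Polynomial.coeff_add, Polynomial.coeff_zero] at h5 ⊢
  omega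

/-- The separating congruence. -/
private def myCon (n : ℕ) : RingCon (Polynomial ℕ) where
  r p q := p = q ∨ (p.eval 1 = q.eval 1 ∧ Dpred n p ∧ Dpred n q)
  iseqv := by
    refine ⟨fun p => Or.inl rfl, ?_, ?_⟩
    · rintro p q (rfl | ⟨h1, h2, h3⟩)
      · exact Or.inl rfl
      · exact Or.inr ⟨h1.symm, h3, h2⟩
    · rintro p q r (rfl | ⟨h1, h2, h3⟩) (rfl | ⟨g1, g2, g3⟩)
      · exact Or.inl rfl
      · exact Or.inr ⟨g1, g2, g3⟩
      · exact Or.inr ⟨h1, h2, h3⟩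
      · exact Or.inr ⟨h1.trans g1, h2, g3⟩
  mul' := by
    rintro p q a b (rfl | ⟨h1, h2, h3⟩) (rfl | ⟨g1, g2, g3⟩)
    · exact Or.inl rfl
    · rcases eq_or_ne p 0 with rfl | hp
      · simp
      · refine Or.inr ⟨by simp [g1], ?_, ?_⟩
        · rw [mul_comm]; exact D_mul g2 hp
        · rw [mul_comm]; exact D_mul g3 hp
    · rcases eq_or_ne a 0 with rfl | ha
      · simp
      · exact Or.inr ⟨by simp [h1], D_mul h2 ha, D_mul h3 ha⟩
    · exact Or.inr ⟨by simp [h1, g1], D_mul h2 (D_ne_zero g2), D_mul h3 (D_ne_zero g3)⟩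
  add' := by
    rintro p q a b (rfl | ⟨h1, h2, h3⟩) (rfl | ⟨g1, g2, g3⟩)
    · exact Or.inl rfl
    · exact Or.inr ⟨by simp [g1], by rw [add_comm]; exact D_add g2 p, by rw [add_comm]; exact D_add g3 p⟩
    · exact Or.inr ⟨by simp [h1], D_add h2 a, D_add h3 a⟩
    · exact Or.inr ⟨by simp [h1, g1], D_add h2 a, D_add h3 b⟩

private lemma coeff_key (n m : ℕ) (h : Polynomial.coeff (X ^ (n+1) + 1 : Polynomial ℕ) m ≠ 0) :
    m = n + 1 ∨ m = 0 := by
  by_contra hc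
  push_neg at hc
  apply h
  simp [Polynomial.coeff_add, Polynomial.coeff_X_pow, Polynomial.coeff_one, hc.1, hc.2]

private lemma not_D (n : ℕ) : ¬ Dpred n (X ^ (n+1) + 1 : Polynomial ℕ) := by
  rintro ⟨i, r, s, h1, h2, h3, h4⟩
  have hrk : r.coeff r.natDegree ≠ 0 := fun h => h3 (Polynomial.leadingCoeff_eq_zero.mp h)
  have h4' : (X ^ (n+1) + 1 : Polynomial ℕ) = r * X ^ i + r + s := by rw [h4]; ring
  have c1 : r.natDegree + i = n + 1 ∨ r.natDegree + i = 0 := by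
    refine coeff_key n _ ?_
    rw [h4']
    simp only [Polynomial.coeff_add, Polynomial.coeff_mul_X_pow]
    omega
  have c2 : r.natDegree = n + 1 ∨ r.natDegree = 0 := by
    refine coeff_key n _ ?_
    rw [h4']
    simp only [Polynomial.coeff_add]
    omega
  omega

theorem stmt_9 :
    ∀ n : ℕ, 1 ≤ n →
      (ringConGen (fun p q : Polynomial ℕ =>
          ∃ i, 2 ≤ i ∧ i ≤ n ∧ p = X ^ i + 1 ∧ q = X + 1) <
        ringConGen (fun p q : Polynomial ℕ =>
          ∃ i, 2 ≤ i ∧ i ≤ n + 1 ∧ p = X ^ i + 1 ∧ q = X + 1)) ∧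
      ¬ (ringConGen (fun p q : Polynomial ℕ =>
          ∃ i, 2 ≤ i ∧ i ≤ n ∧ p = X ^ i + 1 ∧ q = X + 1))
          (X ^ (n + 1) + 1) (X + 1) := by
  intro n hn
  have key : ¬ (ringConGen (fun p q : Polynomial ℕ =>
      ∃ i, 2 ≤ i ∧ i ≤ n ∧ p = X ^ i + 1 ∧ q = X + 1)) (X ^ (n + 1) + 1) (X + 1) := by
    intro h
    have hle : ringConGen (fun p q : Polynomial ℕ =>
        ∃ i, 2 ≤ i ∧ i ≤ n ∧ p = X ^ i + 1 ∧ q = X + 1) ≤ myCon n := by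
      apply RingCon.ringConGen_le.mpr
      rintro p q ⟨i, hi2, hin, rfl, rfl⟩
      refine Or.inr ⟨by simp, ⟨i, 1, 0, by omega, hin, one_ne_zero, by ring⟩,
        ⟨1, 1, 0, le_refl 1, hn, one_ne_zero, by ring⟩⟩
    have h2 : (myCon n) (X ^ (n + 1) + 1) (X + 1) := hle h
    rcases h2 with heq | ⟨_, hD, _⟩
    · have := congrArg (fun f => Polynomial.coeff f (n + 1)) heq
      simp only [Polynomial.coeff_add, Polynomial.coeff_X_pow, Polynomial.coeff_one,
        Polynomial.coeff_X] at this
      split_ifs at this <;> omega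
    · exact not_D n hD
  refine ⟨lt_iff_le_not_ge.mpr ⟨?_, ?_⟩, key⟩
  · apply RingCon.ringConGen_mono
    rintro p q ⟨i, hi2, hin, hp, hq⟩
    exact ⟨i, hi2, by omega, hp, hq⟩
  · intro hle2
    apply key
    apply hle2
    exact RingConGen.Rel.of _ _ ⟨n + 1, by omega, le_refl _, rfl, rfl⟩
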